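/- Let K be a positive commutative monoid. Then K has the transportation property if and only if the inner consistency property holds for K-relations, i.e., if and only if for all finite types A, B, C, every pair of inner consistent K-relations R : A × C → K and S : B × C → K is consistent. -/

import Mathlib

/-- A positive commutative monoid `K` has the transportation property if every
balanced instance of the transportation problem over `K` has a solution. -/
def TransportationProperty (K : Type*) [AddCommMonoid K] : Prop :=
  ∀ (m n : ℕ), 0 < m → 0 < n → ∀ (b : Fin m → K) (c : Fin n → K),
    ∑ i, b i = ∑ j, c j →
    ∃ d : Fin m → Fin n → K,
      (∀ i, ∑ j, d i j = b i) ∧ (∀ j, ∑ i, d i j = c j)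

lemma pos_sum_eq_zero {K : Type*} [AddCommMonoid K]
    (hpos : ∀ p q : K, p + q = 0 → p = 0 ∧ q = 0)
    {ι : Type*} (s : Finset ι) (f : ι → K) (h : ∑ i ∈ s, f i = 0) :
    ∀ i ∈ s, f i = 0 := by
  classical
  induction s using Finset.induction_on with
  | empty => simp
  | insert a s hnot ih =>
    rw [Finset.sum_insert hnot] at h
    obtain ⟨h1, h2⟩ := hpos _ _ h
    intro i hi
    rcases Finset.mem_insert.mp hi with rfl | hi
    · exact h1
    · exact ih h2 i hi

/-- a positive commutative monoid has the transportation property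
iff the inner consistency property holds for `K`-relations. -/
theorem transportation_iff_innerConsistency (K : Type*) [AddCommMonoid K]
    (hpos : ∀ p q : K, p + q = 0 → p = 0 ∧ q = 0) :
    TransportationProperty K ↔
      ∀ (A B C : Type) [Fintype A] [Fintype B] [Fintype C]
        (R : A × C → K) (S : B × C → K),
        (∀ c : C, ∑ a : A, R (a, c) = ∑ b : B, S (b, c)) →
        ∃ T : A × B × C → K,
          (∀ (a : A) (c : C), ∑ b : B, T (a, b, c) = R (a, c)) ∧
          (∀ (b : B) (c : C), ∑ a : A, T (a, b, c) = S (b, c)) := by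
  constructor
  · intro hT A B C _ _ _ R S hRS
    by_cases hA : Nonempty A
    · by_cases hB : Nonempty B
      · let eA := Fintype.equivFin A
        let eB := Fintype.equivFin B
        have hm : 0 < Fintype.card A := Fintype.card_pos
        have hn : 0 < Fintype.card B := Fintype.card_pos
        choose d hd1 hd2 using fun c : C =>
          hT _ _ hm hn (fun i => R (eA.symm i, c)) (fun j => S (eB.symm j, c)) (by
            rw [Equiv.sum_comp eA.symm (fun a => R (a, c)),
                Equiv.sum_comp eB.symm (fun b => S (b, c))]
            exact hRS c)
        refine ⟨fun p => d p.2.2 (eA p.1) (eB p.2.1), ?_, ?_⟩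
        · intro a c
          have := hd1 c (eA a)
          simpa using (Equiv.sum_comp eB (fun j => d c (eA a) j)).trans this
        · intro b c
          have := hd2 c (eB b)
          simpa using (Equiv.sum_comp eA (fun i => d c i (eB b))).trans this
      · refine ⟨fun _ => 0, ?_, ?_⟩
        · intro a c
          have hS : ∑ b : B, S (b, c) = 0 := by
            rw [Finset.sum_eq_zero]
            intro b _
            exact absurd ⟨b⟩ hB
          have hR : ∑ a : A, R (a, c) = 0 := (hRS c).trans hS
          have := pos_sum_eq_zero hpos Finset.univ (fun a => R (a, c)) hR a
            (Finset.mem_univ a)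
          simp [this]
        · intro b c
          exact absurd ⟨b⟩ hB
    · refine ⟨fun _ => 0, ?_, ?_⟩
      · intro a c
        exact absurd ⟨a⟩ hA
      · intro b c
        have hR : ∑ a : A, R (a, c) = 0 := by
          rw [Finset.sum_eq_zero]
          intro a _
          exact absurd ⟨a⟩ hA
        have hS : ∑ b : B, S (b, c) = 0 := ((hRS c).symm.trans hR)
        have := pos_sum_eq_zero hpos Finset.univ (fun b => S (b, c)) hS b
          (Finset.mem_univ b)
        simp [this]
  · intro h m n hm hn b c hbc
    obtain ⟨T, h1, h2⟩ := h (Fin m) (Fin n) Unit (fun p => b p.1) (fun p => c p.1)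
      (fun _ => hbc)
    exact ⟨fun i j => T (i, j, ()), fun i => h1 i (), fun j => h2 j ()⟩
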